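/- arXiv:1809.05668 — 13 statements merged into one kernel-verified Lean document; each statement's English description precedes it below -/
import Mathlib

section
/- Let V be an (A,B,C,D)-output nulling subspace and S an (A,B,C,D)-input containing subspace. Then the sum V + S is an (A,B,C,D)-input containing subspace. -/
/-- The sum of an output nulling subspace and an input containing subspace
is input containing. -/
theorem stmt3 {n m p : ℕ}
    (A : Matrix (Fin n) (Fin n) ℝ) (B : Matrix (Fin n) (Fin m) ℝ)
    (C : Matrix (Fin p) (Fin n) ℝ) (D : Matrix (Fin p) (Fin m) ℝ)
    (V S : Submodule ℝ (Fin n → ℝ))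
    (hV : ∀ x ∈ V, ∃ u : Fin m → ℝ,
      A.mulVec x + B.mulVec u ∈ V ∧ C.mulVec x + D.mulVec u = 0)
    (hS : ∀ x ∈ S, ∀ u : Fin m → ℝ,
      C.mulVec x + D.mulVec u = 0 → A.mulVec x + B.mulVec u ∈ S) :
    ∀ x ∈ V ⊔ S, ∀ u : Fin m → ℝ,
      C.mulVec x + D.mulVec u = 0 → A.mulVec x + B.mulVec u ∈ V ⊔ S := by
  intro x hx u hu
  obtain ⟨v, hv, s, hs, rfl⟩ := Submodule.mem_sup.mp hx
  obtain ⟨w, hAv, hCv⟩ := hV v hv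
  have hCs : C.mulVec s + D.mulVec (u - w) = 0 := by
    rw [Matrix.mulVec_add] at hu
    rw [Matrix.mulVec_sub]
    have h : C.mulVec s + (D.mulVec u - D.mulVec w) =
        (C.mulVec v + C.mulVec s + D.mulVec u) - (C.mulVec v + D.mulVec w) := by abel
    rw [h, hu, hCv, sub_zero]
  have hAs := hS s hs (u - w) hCs
  have : A.mulVec (v + s) + B.mulVec u =
      (A.mulVec v + B.mulVec w) + (A.mulVec s + B.mulVec (u - w)) := by
    rw [Matrix.mulVec_add, Matrix.mulVec_sub]
    abel
  rw [this]
  exact Submodule.add_mem _ (Submodule.mem_sup_left hAv) (Submodule.mem_sup_right hAs)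
end

section
/- A subspace L ⊆ ℝⁿ is (A,B,C,D)-output nulling if and only if its orthogonal complement L^⊥ is (Aᵀ,Cᵀ,Bᵀ,Dᵀ)-input containing. -/
open Matrix

lemma dot_transpose' {a b : ℕ} (M : Matrix (Fin a) (Fin b) ℝ) (v : Fin b → ℝ) (w : Fin a → ℝ) :
    dotProduct v (Mᵀ.mulVec w) = dotProduct (M.mulVec v) w := by
  rw [Matrix.dotProduct_mulVec, Matrix.vecMul_transpose]

lemma inner_eq_dot' {k : ℕ} (x y : EuclideanSpace ℝ (Fin k)) :
    (inner ℝ x y : ℝ) = dotProduct (x : Fin k → ℝ) (y : Fin k → ℝ) := by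
  simp [PiLp.inner_apply, dotProduct, mul_comm]

/-- `L` is `(A,B,C,D)`-output nulling iff `Lᗮ` is `(Aᵀ,Cᵀ,Bᵀ,Dᵀ)`-input containing. -/
theorem stmt6 {n m p : ℕ}
    (A : Matrix (Fin n) (Fin n) ℝ) (B : Matrix (Fin n) (Fin m) ℝ)
    (C : Matrix (Fin p) (Fin n) ℝ) (D : Matrix (Fin p) (Fin m) ℝ)
    (L : Submodule ℝ (EuclideanSpace ℝ (Fin n))) :
    (∀ x ∈ L, ∃ u : Fin m → ℝ,
      (WithLp.toLp 2 (A.mulVec x + B.mulVec u) : EuclideanSpace ℝ (Fin n)) ∈ L ∧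
      C.mulVec x + D.mulVec u = 0) ↔
    (∀ x ∈ Lᗮ, ∀ u : Fin p → ℝ,
      B.transpose.mulVec x + D.transpose.mulVec u = 0 →
      (WithLp.toLp 2 (A.transpose.mulVec x + C.transpose.mulVec u) : EuclideanSpace ℝ (Fin n)) ∈ Lᗮ) := by
  constructor
  · intro h x' hx' u' hBD
    refine (Submodule.mem_orthogonal L _).mpr ?_
    intro y hy
    obtain ⟨u, hyL, hCD⟩ := h y hy
    have h0 := (Submodule.mem_orthogonal L x').mp hx' _ hyL
    have h1 : dotProduct (A.mulVec y) (x' : Fin n → ℝ)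
        + dotProduct (B.mulVec u) (x' : Fin n → ℝ) = 0 := by
      rw [inner_eq_dot'] at h0
      rw [← add_dotProduct]
      exact h0
    have h2 : dotProduct (C.mulVec y) u' + dotProduct (D.mulVec u) u' = 0 := by
      rw [← add_dotProduct, hCD, zero_dotProduct]
    have h4 : dotProduct (B.mulVec u) (x' : Fin n → ℝ)
        + dotProduct (D.mulVec u) (u' : Fin p → ℝ) = 0 := by
      rw [← dot_transpose', ← dot_transpose', ← dotProduct_add, hBD,
        dotProduct_zero]
    rw [inner_eq_dot']
    have hexp : dotProduct (y : Fin n → ℝ)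
        ((WithLp.toLp 2 (Aᵀ.mulVec x' + Cᵀ.mulVec u') : EuclideanSpace ℝ (Fin n)) : Fin n → ℝ)
        = dotProduct (A.mulVec y) (x' : Fin n → ℝ)
          + dotProduct (C.mulVec y) (u' : Fin p → ℝ) := by
      rw [show ((WithLp.toLp 2 (Aᵀ.mulVec x' + Cᵀ.mulVec u') : EuclideanSpace ℝ (Fin n)) : Fin n → ℝ)
          = Aᵀ.mulVec (x' : Fin n → ℝ) + Cᵀ.mulVec (u' : Fin p → ℝ) from rfl,
        dotProduct_add, dot_transpose', dot_transpose']
    rw [hexp]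
    linarith
  · intro h x hx
    let E := EuclideanSpace ℝ (Fin n)
    let F := EuclideanSpace ℝ (Fin p)
    let G := WithLp 2 (E × F)
    let eqv := WithLp.linearEquiv 2 ℝ (E × F)
    let ΦB : (Fin m → ℝ) →ₗ[ℝ] E :=
      (WithLp.linearEquiv 2 ℝ (Fin n → ℝ)).symm.toLinearMap.comp B.mulVecLin
    let ΦD : (Fin m → ℝ) →ₗ[ℝ] F :=
      (WithLp.linearEquiv 2 ℝ (Fin p → ℝ)).symm.toLinearMap.comp D.mulVecLin
    let Φ : (Fin m → ℝ) →ₗ[ℝ] G := eqv.symm.toLinearMap.comp (ΦB.prod ΦD)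
    let ι : E →ₗ[ℝ] G := eqv.symm.toLinearMap.comp (LinearMap.inl ℝ E F)
    let W : Submodule ℝ G := LinearMap.range Φ ⊔ L.map ι
    have hWW : Wᗮᗮ = W := Submodule.orthogonal_orthogonal W
    have key : (eqv.symm (WithLp.toLp 2 (-(A.mulVec x)), WithLp.toLp 2 (-(C.mulVec x))) : G) ∈ W := by
      rw [← hWW]
      refine (Submodule.mem_orthogonal _ _).mpr ?_
      intro z hz
      rw [Submodule.mem_orthogonal] at hz
      set x' : EuclideanSpace ℝ (Fin n) := (eqv z).1 with hx'def
      set u' : EuclideanSpace ℝ (Fin p) := (eqv z).2 with hu'def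
      have hBDz : Bᵀ.mulVec (x' : Fin n → ℝ) + Dᵀ.mulVec (u' : Fin p → ℝ) = 0 := by
        set s : Fin m → ℝ := Bᵀ.mulVec (x' : Fin n → ℝ) + Dᵀ.mulVec (u' : Fin p → ℝ) with hs
        have hz1 := hz (Φ s) (Submodule.mem_sup_left ⟨s, rfl⟩)
        have hz1' : dotProduct (B.mulVec s) (x' : Fin n → ℝ)
            + dotProduct (D.mulVec s) (u' : Fin p → ℝ) = 0 := by
          rw [WithLp.prod_inner_apply, inner_eq_dot', inner_eq_dot'] at hz1
          exact hz1
        refine dotProduct_self_eq_zero.mp ?_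
        calc dotProduct s s
            = dotProduct (Bᵀ.mulVec (x' : Fin n → ℝ)) s
              + dotProduct (Dᵀ.mulVec (u' : Fin p → ℝ)) s := by
              rw [← add_dotProduct, ← hs]
          _ = dotProduct s (Bᵀ.mulVec (x' : Fin n → ℝ))
              + dotProduct s (Dᵀ.mulVec (u' : Fin p → ℝ)) := by
              rw [dotProduct_comm s, dotProduct_comm s]
          _ = dotProduct (B.mulVec s) (x' : Fin n → ℝ)
              + dotProduct (D.mulVec s) (u' : Fin p → ℝ) := by
              rw [dot_transpose', dot_transpose']
          _ = 0 := hz1'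
      have hx'mem : x' ∈ Lᗮ := by
        refine (Submodule.mem_orthogonal L _).mpr ?_
        intro l hl
        have hz2 := hz (ι l) (Submodule.mem_sup_right ⟨l, hl, rfl⟩)
        have hz2' : (inner ℝ l x' : ℝ) + (inner ℝ (0 : EuclideanSpace ℝ (Fin p)) u' : ℝ) = 0 := by
          rw [WithLp.prod_inner_apply] at hz2
          exact hz2
        rw [inner_zero_left, add_zero] at hz2'
        exact hz2'
      have hmem := h x' hx'mem u' hBDz
      have hinner' : dotProduct (A.mulVec x) (x' : Fin n → ℝ)
          + dotProduct (C.mulVec x) (u' : Fin p → ℝ) = 0 := by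
        have h0 := (Submodule.mem_orthogonal L _).mp hmem x hx
        rw [inner_eq_dot',
          show ((WithLp.toLp 2 (Aᵀ.mulVec x' + Cᵀ.mulVec u') : EuclideanSpace ℝ (Fin n)) : Fin n → ℝ)
            = Aᵀ.mulVec (x' : Fin n → ℝ) + Cᵀ.mulVec (u' : Fin p → ℝ) from rfl,
          dotProduct_add, dot_transpose', dot_transpose'] at h0
        exact h0
      have hfin : dotProduct (x' : Fin n → ℝ) (-(A.mulVec x))
          + dotProduct (u' : Fin p → ℝ) (-(C.mulVec x)) = 0 := by
        rw [dotProduct_neg, dotProduct_neg,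
          dotProduct_comm (x' : Fin n → ℝ), dotProduct_comm (u' : Fin p → ℝ)]
        linarith
      rw [WithLp.prod_inner_apply, inner_eq_dot', inner_eq_dot']
      exact hfin
    rw [Submodule.mem_sup] at key
    obtain ⟨y, ⟨u, hu⟩, zl, hzl, hsum⟩ := key
    obtain ⟨l, hl, hil⟩ := Submodule.mem_map.mp hzl
    subst hu hil
    refine ⟨u, ?_, ?_⟩
    · have h5 : (WithLp.toLp 2 (A.mulVec x + B.mulVec u) : EuclideanSpace ℝ (Fin n)) = -l := by
        ext i
        have hc : B.mulVec u i + l i = -(A.mulVec x i) :=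
          congrArg (fun g : G => (eqv g).1 i) hsum
        show A.mulVec x i + B.mulVec u i = -(l i)
        linarith
      rw [h5]
      exact L.neg_mem hl
    · funext i
      have hc : D.mulVec u i + 0 = -(C.mulVec x i) :=
        congrArg (fun g : G => (eqv g).2 i) hsum
      show C.mulVec x i + D.mulVec u i = (0 : ℝ)
      linarith
end

section
/- A subspace V is (A,B,C,D)-output nulling if and only if there exists a feedback matrix F ∈ ℝ^{m×n} such that (A+BF)V ⊆ V and (C+DF)V = 0. -/
/-- `V` is output nulling iff it has an output nulling friend `F`. -/
theorem stmt7 {n m p : ℕ}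
    (A : Matrix (Fin n) (Fin n) ℝ) (B : Matrix (Fin n) (Fin m) ℝ)
    (C : Matrix (Fin p) (Fin n) ℝ) (D : Matrix (Fin p) (Fin m) ℝ)
    (V : Submodule ℝ (Fin n → ℝ)) :
    (∀ x ∈ V, ∃ u : Fin m → ℝ,
      A.mulVec x + B.mulVec u ∈ V ∧ C.mulVec x + D.mulVec u = 0) ↔
    (∃ F : Matrix (Fin m) (Fin n) ℝ,
      (∀ x ∈ V, (A + B * F).mulVec x ∈ V) ∧
      (∀ x ∈ V, (C + D * F).mulVec x = 0)) := by
  constructor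
  · intro h
    -- the subspace of "good" pairs (x, u)
    set W : Submodule ℝ ((Fin n → ℝ) × (Fin m → ℝ)) :=
      { carrier := {q | q.1 ∈ V ∧ A.mulVec q.1 + B.mulVec q.2 ∈ V ∧
          C.mulVec q.1 + D.mulVec q.2 = 0}
        zero_mem' := by
          refine ⟨V.zero_mem, ?_, ?_⟩ <;> simp [Matrix.mulVec_zero]
        add_mem' := by
          rintro ⟨x1, u1⟩ ⟨x2, u2⟩ ⟨h1, h2, h3⟩ ⟨h1', h2', h3'⟩
          refine ⟨V.add_mem h1 h1', ?_, ?_⟩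
          · simpa [Matrix.mulVec_add, add_add_add_comm] using V.add_mem h2 h2'
          · have := congrArg₂ (· + ·) h3 h3'
            simpa [Matrix.mulVec_add, add_add_add_comm] using this
        smul_mem' := by
          rintro c ⟨x, u⟩ ⟨h1, h2, h3⟩
          refine ⟨V.smul_mem c h1, ?_, ?_⟩
          · simpa [Matrix.mulVec_smul, smul_add] using V.smul_mem c h2
          · have := congrArg (c • ·) h3
            simpa [Matrix.mulVec_smul, smul_add] using this } with hW
    have hmem : ∀ q : (Fin n → ℝ) × (Fin m → ℝ), q ∈ W ↔
        (q.1 ∈ V ∧ A.mulVec q.1 + B.mulVec q.2 ∈ V ∧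
          C.mulVec q.1 + D.mulVec q.2 = 0) := fun q => Iff.rfl
    -- projection to V
    let π : W →ₗ[ℝ] V :=
      LinearMap.codRestrict V ((LinearMap.fst ℝ _ _).comp W.subtype)
        (fun w => ((hmem w).mp w.2).1)
    have hπ : LinearMap.range π = ⊤ := by
      rw [LinearMap.range_eq_top]
      intro v
      obtain ⟨u, hu1, hu2⟩ := h v v.2
      exact ⟨⟨(v.1, u), (hmem _).mpr ⟨v.2, hu1, hu2⟩⟩, rfl⟩
    obtain ⟨g, hg⟩ := π.exists_rightInverse_of_surjective hπ
    obtain ⟨Q, hQ⟩ := Submodule.exists_isCompl V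
    let pr := V.linearProjOfIsCompl Q hQ
    let f : (Fin n → ℝ) →ₗ[ℝ] (Fin m → ℝ) :=
      ((LinearMap.snd ℝ _ _).comp (W.subtype.comp g)).comp pr
    refine ⟨LinearMap.toMatrix' f, ?_, ?_⟩ <;> intro x hx <;>
    · have hFx : (LinearMap.toMatrix' f).mulVec x = f x := by
        rw [← Matrix.toLin'_apply, Matrix.toLin'_toMatrix']
      have hpr : pr x = ⟨x, hx⟩ := Submodule.linearProjOfIsCompl_apply_left hQ ⟨x, hx⟩
      have hgmem := (hmem _).mp (g ⟨x, hx⟩).2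
      have hg1 : ((g ⟨x, hx⟩ : W) : (Fin n → ℝ) × (Fin m → ℝ)).1 = x := by
        have := LinearMap.congr_fun hg ⟨x, hx⟩
        exact congrArg Subtype.val this
      obtain ⟨h1, h2, h3⟩ := hgmem
      rw [hg1] at h2 h3
      have hfx : f x = ((g ⟨x, hx⟩ : W) : (Fin n → ℝ) × (Fin m → ℝ)).2 := by
        simp [f, hpr]
      first
      | · show (A + B * LinearMap.toMatrix' f).mulVec x ∈ V
          rw [Matrix.add_mulVec, ← Matrix.mulVec_mulVec, hFx, hfx]
          exact h2
      | · show (C + D * LinearMap.toMatrix' f).mulVec x = 0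
          rw [Matrix.add_mulVec, ← Matrix.mulVec_mulVec, hFx, hfx]
          exact h3
  · rintro ⟨F, h1, h2⟩ x hx
    refine ⟨F.mulVec x, ?_, ?_⟩
    · have := h1 x hx
      rwa [Matrix.add_mulVec, ← Matrix.mulVec_mulVec] at this
    · have := h2 x hx
      rwa [Matrix.add_mulVec, ← Matrix.mulVec_mulVec] at this
end

section
/- A subspace S is (A,B,C,D)-input containing if and only if there exists an output injection matrix G ∈ ℝ^{n×p} such that (A+GC)S ⊆ S and im(B+GD) ⊆ S. -/
/-- `S` is input containing iff it has an input containing friend `G`. -/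
theorem stmt8 {n m p : ℕ}
    (A : Matrix (Fin n) (Fin n) ℝ) (B : Matrix (Fin n) (Fin m) ℝ)
    (C : Matrix (Fin p) (Fin n) ℝ) (D : Matrix (Fin p) (Fin m) ℝ)
    (S : Submodule ℝ (Fin n → ℝ)) :
    (∀ x ∈ S, ∀ u : Fin m → ℝ,
      C.mulVec x + D.mulVec u = 0 → A.mulVec x + B.mulVec u ∈ S) ↔
    (∃ G : Matrix (Fin n) (Fin p) ℝ,
      (∀ x ∈ S, (A + G * C).mulVec x ∈ S) ∧
      (∀ u : Fin m → ℝ, (B + G * D).mulVec u ∈ S)) := by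
  constructor
  · intro hIC
    -- linear maps on S × ℝ^m
    set V := S × (Fin m → ℝ)
    let φ : V →ₗ[ℝ] (Fin p → ℝ) :=
      (Matrix.toLin' C).comp (S.subtype.comp (LinearMap.fst ℝ S (Fin m → ℝ))) +
      (Matrix.toLin' D).comp (LinearMap.snd ℝ S (Fin m → ℝ))
    let α : V →ₗ[ℝ] (Fin n → ℝ) :=
      (Matrix.toLin' A).comp (S.subtype.comp (LinearMap.fst ℝ S (Fin m → ℝ))) +
      (Matrix.toLin' B).comp (LinearMap.snd ℝ S (Fin m → ℝ))
    have hφ : ∀ v : V, φ v = C.mulVec v.1 + D.mulVec v.2 := by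
      intro v; simp [φ, Matrix.toLin'_apply]; rfl
    have hα : ∀ v : V, α v = A.mulVec v.1 + B.mulVec v.2 := by
      intro v; simp [α, Matrix.toLin'_apply]; rfl
    let h : V →ₗ[ℝ] ((Fin n → ℝ) ⧸ S) := -(S.mkQ.comp α)
    have hle : LinearMap.ker φ ≤ LinearMap.ker h := by
      intro v hv
      simp only [LinearMap.mem_ker] at hv ⊢
      rw [hφ] at hv
      simp only [h, LinearMap.neg_apply, LinearMap.comp_apply, neg_eq_zero,
        Submodule.mkQ_apply, Submodule.Quotient.mk_eq_zero]
      rw [hα]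
      exact hIC v.1 v.1.2 v.2 hv
    let ψ : LinearMap.range φ →ₗ[ℝ] ((Fin n → ℝ) ⧸ S) :=
      ((LinearMap.ker φ).liftQ h hle).comp
        (LinearMap.quotKerEquivRange φ).symm.toLinearMap
    have hψ : ∀ v : V, ψ ⟨φ v, LinearMap.mem_range_self φ v⟩ = h v := by
      intro v
      simp only [ψ, LinearMap.comp_apply, LinearEquiv.coe_coe]
      rw [LinearMap.quotKerEquivRange_symm_apply_image]
      exact Submodule.liftQ_apply _ h v
    obtain ⟨Ψ, hΨ⟩ := ψ.exists_extend
    obtain ⟨s, hs⟩ := S.mkQ.exists_rightInverse_of_surjective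
      (by rw [Submodule.range_mkQ])
    let Gl : (Fin p → ℝ) →ₗ[ℝ] (Fin n → ℝ) := s.comp Ψ
    refine ⟨LinearMap.toMatrix' Gl, ?_, ?_⟩
    all_goals
      have key : ∀ x ∈ S, ∀ u : Fin m → ℝ,
          A.mulVec x + B.mulVec u +
            (LinearMap.toMatrix' Gl).mulVec (C.mulVec x + D.mulVec u) ∈ S := by
        intro x hx u
        have hG : (LinearMap.toMatrix' Gl).mulVec (C.mulVec x + D.mulVec u)
            = Gl (C.mulVec x + D.mulVec u) := by
          rw [← Matrix.toLin'_apply, Matrix.toLin'_toMatrix']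
        rw [hG, ← Submodule.Quotient.mk_eq_zero, ← Submodule.mkQ_apply, map_add]
        set v : S × (Fin m → ℝ) := (⟨x, hx⟩, u) with hv
        have h1 : C.mulVec x + D.mulVec u = φ v := (hφ v).symm
        have h2 : S.mkQ (Gl (φ v)) = Ψ (φ v) := by
          have := congrArg (fun f => f (Ψ (φ v))) hs
          simpa [Gl] using this
        have h3 : Ψ (φ v) = ψ ⟨φ v, LinearMap.mem_range_self φ v⟩ := by
          have := congrArg (fun f => f (⟨φ v, LinearMap.mem_range_self φ v⟩ :
            LinearMap.range φ)) hΨ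
          simpa using this
        rw [h1, h2, h3, hψ v]
        have h4 : S.mkQ (A.mulVec x + B.mulVec u) = S.mkQ (α v) := by
          rw [hα v]
        rw [h4]
        simp [h]
    · intro x hx
      have := key x hx 0
      simp only [Matrix.mulVec_zero, add_zero] at this
      rw [Matrix.add_mulVec, ← Matrix.mulVec_mulVec]
      simpa using this
    · intro u
      have := key 0 S.zero_mem u
      simp only [Matrix.mulVec_zero, zero_add] at this
      rw [Matrix.add_mulVec, ← Matrix.mulVec_mulVec]
      simpa using this
  · rintro ⟨G, hS, hB⟩ x hx u hCD
    have h1 := hS x hx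
    have h2 := hB u
    have : (A + G * C).mulVec x + (B + G * D).mulVec u
        = A.mulVec x + B.mulVec u + G.mulVec (C.mulVec x + D.mulVec u) := by
      simp only [Matrix.add_mulVec, ← Matrix.mulVec_mulVec, Matrix.mulVec_add]
      abel
    have hm := S.add_mem h1 h2
    rw [this, hCD, Matrix.mulVec_zero, add_zero] at hm
    exact hm
end

section
/- Let à ∈ 𝔽^{n₁×n₂}, B̃ ∈ 𝔽^{n₁×m}, C̃ ∈ 𝔽^{p×n₂} be matrices over a field 𝔽, and let M ⊆ 𝔽^{n₂} and N ⊆ 𝔽^{n₁} be subspaces. Then ÃM ⊆ N + im B̃ and Ã(M ∩ ker C̃) ⊆ N hold if and only if there exists K ∈ 𝔽^{m×p} such that (Ã + B̃ K C̃)M ⊆ N. -/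
/-- `Ã M ⊆ N + im B̃` and `Ã (M ∩ ker C̃) ⊆ N` hold iff there is `K` with
`(Ã + B̃ K C̃) M ⊆ N`. -/
theorem stmt9 {F : Type*} [Field F] {n₁ n₂ m p : ℕ}
    (Atil : Matrix (Fin n₁) (Fin n₂) F) (Btil : Matrix (Fin n₁) (Fin m) F)
    (Ctil : Matrix (Fin p) (Fin n₂) F)
    (M : Submodule F (Fin n₂ → F)) (N : Submodule F (Fin n₁ → F)) :
    ((∀ x ∈ M, ∃ y ∈ N, ∃ u : Fin m → F, Atil.mulVec x = y + Btil.mulVec u) ∧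
     (∀ x ∈ M, Ctil.mulVec x = 0 → Atil.mulVec x ∈ N)) ↔
    (∃ K : Matrix (Fin m) (Fin p) F, ∀ x ∈ M, (Atil + Btil * K * Ctil).mulVec x ∈ N) := by
  constructor
  · rintro ⟨h1, h2⟩
    -- set up maps
    set Q := (Fin n₁ → F) ⧸ N
    let f : M →ₗ[F] Q := (N.mkQ ∘ₗ Atil.mulVecLin) ∘ₗ M.subtype
    let c : M →ₗ[F] (Fin p → F) := Ctil.mulVecLin ∘ₗ M.subtype
    let b : (Fin m → F) →ₗ[F] Q := N.mkQ ∘ₗ Btil.mulVecLin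
    -- section of c.rangeRestrict
    obtain ⟨s, hs⟩ := c.rangeRestrict.exists_rightInverse_of_surjective
      c.range_rangeRestrict
    let g₀ : (LinearMap.range c) →ₗ[F] Q := f ∘ₗ s
    have hg₀ : ∀ z : M, g₀ (c.rangeRestrict z) = f z := by
      intro z
      have hker : c (s (c.rangeRestrict z) - z) = 0 := by
        have : c.rangeRestrict (s (c.rangeRestrict z)) = c.rangeRestrict z := by
          rw [← LinearMap.comp_apply, hs]; rfl
        have := congrArg Subtype.val this
        simp only [LinearMap.rangeRestrict, LinearMap.codRestrict_apply] at this
        simp [map_sub, this]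
      have hfker : f (s (c.rangeRestrict z) - z) = 0 := by
        have hmem : Ctil.mulVec ((s (c.rangeRestrict z) - z : M) : Fin n₂ → F) = 0 := hker
        have := h2 _ ((s (c.rangeRestrict z) - z : M)).2 hmem
        simpa [f, Q, Submodule.Quotient.mk_eq_zero] using this
      have := map_sub f (s (c.rangeRestrict z)) z
      rw [hfker] at this
      simp only [g₀, LinearMap.comp_apply]
      exact sub_eq_zero.mp this.symm
    have hcod : ∀ w : LinearMap.range c, g₀ w ∈ LinearMap.range b := by
      intro w
      obtain ⟨y, hy, u, hu⟩ := h1 _ (s w).2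
      refine ⟨u, ?_⟩
      simp only [g₀, f, b, LinearMap.comp_apply, Matrix.mulVecLin_apply, Submodule.mkQ_apply,
        Submodule.subtype_apply]
      rw [hu, Submodule.mkQ_apply, Submodule.mkQ_apply, Submodule.Quotient.eq]
      simpa using N.neg_mem hy
    obtain ⟨t, ht⟩ := b.rangeRestrict.exists_rightInverse_of_surjective b.range_rangeRestrict
    obtain ⟨W, hW⟩ := Submodule.exists_isCompl (LinearMap.range c)
    let π := (LinearMap.range c).linearProjOfIsCompl W hW
    let g₁ : (LinearMap.range c) →ₗ[F] (LinearMap.range b) :=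
      g₀.codRestrict (LinearMap.range b) hcod
    let h' : (Fin p → F) →ₗ[F] (Fin m → F) := (t ∘ₗ g₁) ∘ₗ π
    refine ⟨LinearMap.toMatrix' (-h'), ?_⟩
    intro x hx
    have hKv : ∀ v, (LinearMap.toMatrix' (-h')).mulVec v = -(h' v) := by
      intro v
      rw [← Matrix.toLin'_apply, Matrix.toLin'_toMatrix', LinearMap.neg_apply]
    rw [← Submodule.Quotient.mk_eq_zero, Matrix.add_mulVec, Matrix.mul_assoc,
      ← Matrix.mulVec_mulVec, ← Matrix.mulVec_mulVec, hKv]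
    have wmem : Ctil.mulVec x ∈ LinearMap.range c := ⟨⟨x, hx⟩, rfl⟩
    set w : LinearMap.range c := ⟨Ctil.mulVec x, wmem⟩ with hwdef
    have hπ : π (Ctil.mulVec x) = w := Submodule.linearProjOfIsCompl_apply_left hW w
    have hbt : b (t (g₁ w)) = g₀ w := by
      have := congrArg (fun (ψ : LinearMap.range b →ₗ[F] LinearMap.range b) =>
        ((ψ (g₁ w) : LinearMap.range b) : Q)) ht
      simpa [g₁] using this
    have hcw : c.rangeRestrict ⟨x, hx⟩ = w := by
      apply Subtype.ext
      rfl
    have hg : g₀ w = f ⟨x, hx⟩ := by rw [← hcw]; exact hg₀ ⟨x, hx⟩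
    have : (Submodule.Quotient.mk (Atil.mulVec x + Btil.mulVec (-(h' (Ctil.mulVec x)))) : Q)
        = f ⟨x, hx⟩ + b (-(h' (Ctil.mulVec x))) := rfl
    rw [this]
    have : b (-(h' (Ctil.mulVec x))) = -(b (t (g₁ w))) := by
      rw [map_neg]
      congr 1
      simp only [h', LinearMap.comp_apply, hπ]
    rw [this, hbt, hg, add_neg_cancel]
  · rintro ⟨K, hK⟩
    constructor
    · intro x hx
      refine ⟨(Atil + Btil * K * Ctil).mulVec x, hK x hx, -(K.mulVec (Ctil.mulVec x)), ?_⟩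
      rw [Matrix.add_mulVec, Matrix.mul_assoc, ← Matrix.mulVec_mulVec,
        ← Matrix.mulVec_mulVec, Matrix.mulVec_neg]
      abel
    · intro x hx hC
      have := hK x hx
      rwa [Matrix.add_mulVec, Matrix.mul_assoc, ← Matrix.mulVec_mulVec,
        ← Matrix.mulVec_mulVec, hC, Matrix.mulVec_zero, Matrix.mulVec_zero, add_zero] at this
end

section
/- Let V be an (A,B,E,D_z)-output nulling subspace of ℝⁿ and S an (A,H,C,G_y)-input containing subspace. Assume (a) im[H;G_z] ⊆ (V ⊕ 0) + im[B;D_z], (b) (S ⊕ ℝ^q) ∩ ker[C G_y] ⊆ ker[E G_z], and (c) S ⊆ V. Then there exists a matrix K ∈ ℝ^{m×p} such that [A+BKC, H+BKG_y; E+D_zKC, G_z+D_zKG_y](S ⊕ ℝ^q) ⊆ V ⊕ 0. -/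
/-- Lemma 8 (sufficiency): under conditions (a), (b), (c) there exists a static
output feedback `K` mapping `S ⊕ W` into `V ⊕ 0`. -/
theorem stmt10 {n m p q r : ℕ}
    (A : Matrix (Fin n) (Fin n) ℝ) (B : Matrix (Fin n) (Fin m) ℝ)
    (H : Matrix (Fin n) (Fin q) ℝ) (C : Matrix (Fin p) (Fin n) ℝ)
    (Gy : Matrix (Fin p) (Fin q) ℝ) (E : Matrix (Fin r) (Fin n) ℝ)
    (Dz : Matrix (Fin r) (Fin m) ℝ) (Gz : Matrix (Fin r) (Fin q) ℝ)
    (V S : Submodule ℝ (Fin n → ℝ))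
    (hV : ∀ x ∈ V, ∃ u : Fin m → ℝ,
      A.mulVec x + B.mulVec u ∈ V ∧ E.mulVec x + Dz.mulVec u = 0)
    (hS : ∀ x ∈ S, ∀ w : Fin q → ℝ,
      C.mulVec x + Gy.mulVec w = 0 → A.mulVec x + H.mulVec w ∈ S)
    (ha : ∀ w : Fin q → ℝ, ∃ v ∈ V, ∃ u : Fin m → ℝ,
      H.mulVec w = v + B.mulVec u ∧ Gz.mulVec w = Dz.mulVec u)
    (hb : ∀ x ∈ S, ∀ w : Fin q → ℝ,
      C.mulVec x + Gy.mulVec w = 0 → E.mulVec x + Gz.mulVec w = 0)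
    (hc : S ≤ V) :
    ∃ K : Matrix (Fin m) (Fin p) ℝ, ∀ x ∈ S, ∀ w : Fin q → ℝ,
      (A + B * K * C).mulVec x + (H + B * K * Gy).mulVec w ∈ V ∧
      (E + Dz * K * C).mulVec x + (Gz + Dz * K * Gy).mulVec w = 0 := by
  classical
  -- the submodule of "good" pairs (y, u)
  let Good : Submodule ℝ ((Fin p → ℝ) × (Fin m → ℝ)) :=
    { carrier := {z | ∃ x ∈ S, ∃ w : Fin q → ℝ,
        z.1 = C.mulVec x + Gy.mulVec w ∧
        A.mulVec x + H.mulVec w + B.mulVec z.2 ∈ V ∧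
        E.mulVec x + Gz.mulVec w + Dz.mulVec z.2 = 0}
      zero_mem' := by
        refine ⟨0, S.zero_mem, 0, ?_, ?_, ?_⟩ <;>
          simp [Matrix.mulVec_zero]
      add_mem' := by
        rintro ⟨y1, u1⟩ ⟨y2, u2⟩ ⟨x1, hx1, w1, h1, h2, h3⟩ ⟨x2, hx2, w2, k1, k2, k3⟩
        dsimp only at h1 h2 h3 k1 k2 k3 ⊢
        refine ⟨x1 + x2, S.add_mem hx1 hx2, w1 + w2, ?_, ?_, ?_⟩
        · simp only [Prod.fst_add, Matrix.mulVec_add, h1, k1]; abel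
        · have : A.mulVec (x1 + x2) + H.mulVec (w1 + w2) + B.mulVec (u1 + u2) =
            (A.mulVec x1 + H.mulVec w1 + B.mulVec u1) +
            (A.mulVec x2 + H.mulVec w2 + B.mulVec u2) := by
            simp only [Matrix.mulVec_add]; abel
          simpa [this] using V.add_mem h2 k2
        · have : E.mulVec (x1 + x2) + Gz.mulVec (w1 + w2) + Dz.mulVec (u1 + u2) =
            (E.mulVec x1 + Gz.mulVec w1 + Dz.mulVec u1) +
            (E.mulVec x2 + Gz.mulVec w2 + Dz.mulVec u2) := by
            simp only [Matrix.mulVec_add]; abel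
          simp [this, h3, k3]
      smul_mem' := by
        rintro c ⟨y, u⟩ ⟨x, hx, w, h1, h2, h3⟩
        dsimp only at h1 h2 h3 ⊢
        refine ⟨c • x, S.smul_mem c hx, c • w, ?_, ?_, ?_⟩
        · simp [Prod.smul_fst, Matrix.mulVec_smul, smul_add, h1]
        · have : A.mulVec (c • x) + H.mulVec (c • w) + B.mulVec (c • u) =
            c • (A.mulVec x + H.mulVec w + B.mulVec u) := by
            simp only [Matrix.mulVec_smul, smul_add]
          simpa [this] using V.smul_mem c h2
        · have : E.mulVec (c • x) + Gz.mulVec (c • w) + Dz.mulVec (c • u) =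
            c • (E.mulVec x + Gz.mulVec w + Dz.mulVec u) := by
            simp only [Matrix.mulVec_smul, smul_add]
          simp [this, h3] }
  -- projection to the first coordinate
  let π : Good →ₗ[ℝ] (Fin p → ℝ) :=
    (LinearMap.fst ℝ (Fin p → ℝ) (Fin m → ℝ)).comp Good.subtype
  let T : Submodule ℝ (Fin p → ℝ) := LinearMap.range π
  -- every Cx + Gy w with x ∈ S lies in T
  have hT : ∀ x ∈ S, ∀ w : Fin q → ℝ, C.mulVec x + Gy.mulVec w ∈ T := by
    intro x hx w
    obtain ⟨u1, hu1, hu1'⟩ := hV x (hc hx)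
    obtain ⟨v, hv, u2, hH, hG⟩ := ha w
    refine ⟨⟨⟨C.mulVec x + Gy.mulVec w, u1 - u2⟩, x, hx, w, rfl, ?_, ?_⟩, rfl⟩
    · have : A.mulVec x + H.mulVec w + B.mulVec (u1 - u2) =
        (A.mulVec x + B.mulVec u1) + v := by
        rw [hH, Matrix.mulVec_sub]; abel
      rw [this]; exact V.add_mem hu1 hv
    · have : E.mulVec x + Gz.mulVec w + Dz.mulVec (u1 - u2) =
        (E.mulVec x + Dz.mulVec u1) + (Gz.mulVec w - Dz.mulVec u2) := by
        rw [Matrix.mulVec_sub]; abel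
      rw [this, hu1', hG]; simp
    
  -- a linear section of the (surjective) range restriction of π
  obtain ⟨g, hg⟩ := LinearMap.exists_rightInverse_of_surjective
    π.rangeRestrict (LinearMap.range_rangeRestrict π)
  -- a projection of ℝ^p onto T
  obtain ⟨T', hT'⟩ := Submodule.exists_isCompl T
  let projT : (Fin p → ℝ) →ₗ[ℝ] T := T.linearProjOfIsCompl T' hT'
  let F : (Fin p → ℝ) →ₗ[ℝ] (Fin m → ℝ) :=
    (LinearMap.snd ℝ (Fin p → ℝ) (Fin m → ℝ)).comp (Good.subtype.comp (g.comp projT))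
  refine ⟨LinearMap.toMatrix' F, ?_⟩
  intro x hx w
  set K : Matrix (Fin m) (Fin p) ℝ := LinearMap.toMatrix' F with hK
  set y : Fin p → ℝ := C.mulVec x + Gy.mulVec w with hy
  have hyT : y ∈ T := hT x hx w
  have hKy : K.mulVec y = F y := by
    rw [hK, ← Matrix.toLin'_apply, Matrix.toLin'_toMatrix']
  -- the element of Good sitting over y
  have hproj : projT y = ⟨y, hyT⟩ := T.linearProjOfIsCompl_apply_left hT' ⟨y, hyT⟩
  set z : Good := g ⟨y, hyT⟩ with hz
  have hz1 : (z : (Fin p → ℝ) × (Fin m → ℝ)).1 = y := by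
    have h := LinearMap.congr_fun hg ⟨y, hyT⟩
    have := congrArg Subtype.val h
    simpa [π, LinearMap.codRestrict_apply] using this
  have hFy : F y = (z : (Fin p → ℝ) × (Fin m → ℝ)).2 := by
    simp [F, hproj, hz]
  obtain ⟨x', hx', w', h1, h2, h3⟩ := z.2
  set u : Fin m → ℝ := (z : (Fin p → ℝ) × (Fin m → ℝ)).2 with hu
  -- transfer from the representative (x', w') to (x, w)
  have hdiff : C.mulVec (x - x') + Gy.mulVec (w - w') = 0 := by
    simp only [Matrix.mulVec_sub]
    have : C.mulVec x + Gy.mulVec w = C.mulVec x' + Gy.mulVec w' := by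
      rw [← hy, ← hz1, h1]
    rw [sub_add_sub_comm, this, sub_self]
  have hxS : x - x' ∈ S := S.sub_mem hx hx'
  have hAs : A.mulVec (x - x') + H.mulVec (w - w') ∈ V := hc (hS _ hxS _ hdiff)
  have hEs : E.mulVec (x - x') + Gz.mulVec (w - w') = 0 := hb _ hxS _ hdiff
  have key1 : A.mulVec x + H.mulVec w + B.mulVec u ∈ V := by
    have : A.mulVec x + H.mulVec w + B.mulVec u =
        (A.mulVec x' + H.mulVec w' + B.mulVec u) +
        (A.mulVec (x - x') + H.mulVec (w - w')) := by
      simp only [Matrix.mulVec_sub]; abel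
    rw [this]; exact V.add_mem h2 hAs
  have key2 : E.mulVec x + Gz.mulVec w + Dz.mulVec u = 0 := by
    have : E.mulVec x + Gz.mulVec w + Dz.mulVec u =
        (E.mulVec x' + Gz.mulVec w' + Dz.mulVec u) +
        (E.mulVec (x - x') + Gz.mulVec (w - w')) := by
      simp only [Matrix.mulVec_sub]; abel
    rw [this, h3, hEs, add_zero]
  have hKyu : K.mulVec y = u := by rw [hKy, hFy, hu]
  constructor
  · have : (A + B * K * C).mulVec x + (H + B * K * Gy).mulVec w =
        A.mulVec x + H.mulVec w + B.mulVec (K.mulVec y) := by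
      simp only [Matrix.add_mulVec, ← Matrix.mulVec_mulVec, hy, Matrix.mulVec_add]
      abel
    rw [this, hKyu]; exact key1
  · have : (E + Dz * K * C).mulVec x + (Gz + Dz * K * Gy).mulVec w =
        E.mulVec x + Gz.mulVec w + Dz.mulVec (K.mulVec y) := by
      simp only [Matrix.add_mulVec, ← Matrix.mulVec_mulVec, hy, Matrix.mulVec_add]
      abel
    rw [this, hKyu]; exact key2
end

section
/- Suppose K ∈ ℝ^{m×p} satisfies [A+BKC, H+BKG_y; E+D_zKC, G_z+D_zKG_y](S ⊕ ℝ^q) ⊆ V ⊕ 0 for subspaces V, S ⊆ ℝⁿ. Then (a) im[H;G_z] ⊆ (V ⊕ 0) + im[B;D_z] and (b) (S ⊕ ℝ^q) ∩ ker[C G_y] ⊆ ker[E G_z]. -/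
/-- Lemma 8 (necessity): if `K` maps `S ⊕ W` into `V ⊕ 0`, then conditions
(a) and (b) hold. -/
theorem stmt11 {n m p q r : ℕ}
    (A : Matrix (Fin n) (Fin n) ℝ) (B : Matrix (Fin n) (Fin m) ℝ)
    (H : Matrix (Fin n) (Fin q) ℝ) (C : Matrix (Fin p) (Fin n) ℝ)
    (Gy : Matrix (Fin p) (Fin q) ℝ) (E : Matrix (Fin r) (Fin n) ℝ)
    (Dz : Matrix (Fin r) (Fin m) ℝ) (Gz : Matrix (Fin r) (Fin q) ℝ)
    (V S : Submodule ℝ (Fin n → ℝ))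
    (K : Matrix (Fin m) (Fin p) ℝ)
    (hK : ∀ x ∈ S, ∀ w : Fin q → ℝ,
      (A + B * K * C).mulVec x + (H + B * K * Gy).mulVec w ∈ V ∧
      (E + Dz * K * C).mulVec x + (Gz + Dz * K * Gy).mulVec w = 0) :
    (∀ w : Fin q → ℝ, ∃ v ∈ V, ∃ u : Fin m → ℝ,
      H.mulVec w = v + B.mulVec u ∧ Gz.mulVec w = Dz.mulVec u) ∧
    (∀ x ∈ S, ∀ w : Fin q → ℝ,
      C.mulVec x + Gy.mulVec w = 0 → E.mulVec x + Gz.mulVec w = 0) := by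
  constructor
  · intro w
    obtain ⟨h1, h2⟩ := hK 0 S.zero_mem w
    simp only [Matrix.mulVec_zero, zero_add, Matrix.add_mulVec,
      ← Matrix.mulVec_mulVec] at h1 h2
    refine ⟨_, h1, -(K.mulVec (Gy.mulVec w)), ?_, ?_⟩
    · simp [Matrix.mulVec_neg]
    · have : Gz.mulVec w = -(Dz.mulVec ((K * Gy).mulVec w)) := by
        rw [eq_neg_iff_add_eq_zero]; simpa [← Matrix.mulVec_mulVec] using h2
      simp [this, Matrix.mulVec_neg, ← Matrix.mulVec_mulVec]
  · intro x hx w hcw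
    obtain ⟨-, h2⟩ := hK x hx w
    have : E.mulVec x + Gz.mulVec w
        + Dz.mulVec (K.mulVec (C.mulVec x + Gy.mulVec w)) = 0 := by
      rw [← h2]
      simp only [Matrix.add_mulVec, ← Matrix.mulVec_mulVec, Matrix.mulVec_add]
      abel
    simpa [hcw] using this
end

section
/- If V₁ and V₂ are (A,B,C,D)-self bounded subspaces with V₁ ⊆ V₂, then every (A,B,C,D)-output nulling friend F of V₂ is also an output nulling friend of V₁; that is, if (A+BF)V₂ ⊆ V₂ and (C+DF)V₂ = 0, then (A+BF)V₁ ⊆ V₁ and (C+DF)V₁ = 0. -/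
/-- If `V₁ ⊆ V₂` are self bounded, every output nulling friend of `V₂` is a friend of `V₁`. -/
theorem stmt12 {n m p : ℕ}
    (A : Matrix (Fin n) (Fin n) ℝ) (B : Matrix (Fin n) (Fin m) ℝ)
    (C : Matrix (Fin p) (Fin n) ℝ) (D : Matrix (Fin p) (Fin m) ℝ)
    (Vstar V₁ V₂ : Submodule ℝ (Fin n → ℝ))
    -- `Vstar` is the largest output nulling subspace
    (hVstarON : ∀ x ∈ Vstar, ∃ u : Fin m → ℝ,
      A.mulVec x + B.mulVec u ∈ Vstar ∧ C.mulVec x + D.mulVec u = 0)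
    (hVstarMax : ∀ W : Submodule ℝ (Fin n → ℝ),
      (∀ x ∈ W, ∃ u : Fin m → ℝ,
        A.mulVec x + B.mulVec u ∈ W ∧ C.mulVec x + D.mulVec u = 0) → W ≤ Vstar)
    -- `V₁`, `V₂` are output nulling
    (hV₁ : ∀ x ∈ V₁, ∃ u : Fin m → ℝ,
      A.mulVec x + B.mulVec u ∈ V₁ ∧ C.mulVec x + D.mulVec u = 0)
    (hV₂ : ∀ x ∈ V₂, ∃ u : Fin m → ℝ,
      A.mulVec x + B.mulVec u ∈ V₂ ∧ C.mulVec x + D.mulVec u = 0)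
    -- `V₁`, `V₂` are self bounded: `Vstar ∩ B (ker D) ⊆ Vᵢ`
    (hsb₁ : ∀ u : Fin m → ℝ, D.mulVec u = 0 → B.mulVec u ∈ Vstar → B.mulVec u ∈ V₁)
    (hsb₂ : ∀ u : Fin m → ℝ, D.mulVec u = 0 → B.mulVec u ∈ Vstar → B.mulVec u ∈ V₂)
    (hsub : V₁ ≤ V₂)
    (F : Matrix (Fin m) (Fin n) ℝ)
    (hF₂ : (∀ x ∈ V₂, (A + B * F).mulVec x ∈ V₂) ∧ (∀ x ∈ V₂, (C + D * F).mulVec x = 0)) :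
    (∀ x ∈ V₁, (A + B * F).mulVec x ∈ V₁) ∧ (∀ x ∈ V₁, (C + D * F).mulVec x = 0) := by
  have hV₂star : V₂ ≤ Vstar := hVstarMax V₂ hV₂
  have key : ∀ x ∈ V₁, (A + B * F).mulVec x ∈ V₁ ∧ (C + D * F).mulVec x = 0 := by
    intro x hx
    obtain ⟨u, huV, huC⟩ := hV₁ x hx
    have hAx2 : (A + B * F).mulVec x ∈ V₂ := hF₂.1 x (hsub hx)
    have hCx2 : (C + D * F).mulVec x = 0 := hF₂.2 x (hsub hx)
    set w := u - F.mulVec x with hw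
    have hBw : B.mulVec w = (A.mulVec x + B.mulVec u) - (A + B * F).mulVec x := by
      simp [hw, Matrix.add_mulVec, Matrix.mulVec_sub, ← Matrix.mulVec_mulVec]

    have hDw : D.mulVec w = 0 := by
      have : D.mulVec w = (C.mulVec x + D.mulVec u) - (C + D * F).mulVec x := by
        simp [hw, Matrix.add_mulVec, Matrix.mulVec_sub, ← Matrix.mulVec_mulVec]
      rw [this, huC, hCx2, sub_zero]
    have hBwStar : B.mulVec w ∈ Vstar := by
      rw [hBw]
      exact Vstar.sub_mem (hV₂star (hsub huV)) (hV₂star hAx2)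
    have hBw1 : B.mulVec w ∈ V₁ := hsb₁ w hDw hBwStar
    constructor
    · have : (A + B * F).mulVec x = (A.mulVec x + B.mulVec u) - B.mulVec w := by
        rw [hBw]; abel
      rw [this]
      exact V₁.sub_mem huV hBw1
    · exact hCx2
  exact ⟨fun x hx => (key x hx).1, fun x hx => (key x hx).2⟩
end

section
/- If S₁ and S₂ are (A,B,C,D)-self hidden subspaces with S₁ ⊆ S₂, then every (A,B,C,D)-input containing friend G of S₁ is also an input containing friend of S₂; that is, if (A+GC)S₁ ⊆ S₁ and im(B+GD) ⊆ S₁, then (A+GC)S₂ ⊆ S₂ and im(B+GD) ⊆ S₂. -/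
/-- If `S₁ ⊆ S₂` are self hidden, every input containing friend of `S₁` is a friend of `S₂`. -/
theorem stmt13 {n m p : ℕ}
    (A : Matrix (Fin n) (Fin n) ℝ) (B : Matrix (Fin n) (Fin m) ℝ)
    (C : Matrix (Fin p) (Fin n) ℝ) (D : Matrix (Fin p) (Fin m) ℝ)
    (Sstar S₁ S₂ : Submodule ℝ (Fin n → ℝ))
    -- `Sstar` is the smallest input containing subspace
    (hSstarIC : ∀ x ∈ Sstar, ∀ u : Fin m → ℝ,
      C.mulVec x + D.mulVec u = 0 → A.mulVec x + B.mulVec u ∈ Sstar)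
    (hSstarMin : ∀ W : Submodule ℝ (Fin n → ℝ),
      (∀ x ∈ W, ∀ u : Fin m → ℝ,
        C.mulVec x + D.mulVec u = 0 → A.mulVec x + B.mulVec u ∈ W) → Sstar ≤ W)
    -- `S₁`, `S₂` are input containing
    (hS₁ : ∀ x ∈ S₁, ∀ u : Fin m → ℝ,
      C.mulVec x + D.mulVec u = 0 → A.mulVec x + B.mulVec u ∈ S₁)
    (hS₂ : ∀ x ∈ S₂, ∀ u : Fin m → ℝ,
      C.mulVec x + D.mulVec u = 0 → A.mulVec x + B.mulVec u ∈ S₂)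
    -- `S₁`, `S₂` are self hidden: `Sᵢ ⊆ Sstar + C⁻¹ (im D)`
    (hsh₁ : ∀ x ∈ S₁, ∃ s ∈ Sstar, ∃ y : Fin n → ℝ, ∃ u : Fin m → ℝ,
      x = s + y ∧ C.mulVec y = D.mulVec u)
    (hsh₂ : ∀ x ∈ S₂, ∃ s ∈ Sstar, ∃ y : Fin n → ℝ, ∃ u : Fin m → ℝ,
      x = s + y ∧ C.mulVec y = D.mulVec u)
    (hsub : S₁ ≤ S₂)
    (G : Matrix (Fin n) (Fin p) ℝ)
    (hG₁ : (∀ x ∈ S₁, (A + G * C).mulVec x ∈ S₁) ∧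
           (∀ u : Fin m → ℝ, (B + G * D).mulVec u ∈ S₁)) :
    (∀ x ∈ S₂, (A + G * C).mulVec x ∈ S₂) ∧
    (∀ u : Fin m → ℝ, (B + G * D).mulVec u ∈ S₂) := by
  refine ⟨?_, fun u => hsub (hG₁.2 u)⟩
  intro x hx
  obtain ⟨s, hs, y, u, rfl, hCy⟩ := hsh₂ x hx
  have hsS1 : s ∈ S₁ := hSstarMin S₁ hS₁ hs
  have hyS2 : y ∈ S₂ := by
    have := S₂.sub_mem hx (hsub hsS1)
    simpa using this
  have key : C.mulVec y + D.mulVec (-u) = 0 := by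
    simp [Matrix.mulVec_neg, hCy]
  have h1 : A.mulVec y + B.mulVec (-u) ∈ S₂ := hS₂ y hyS2 (-u) key
  have h2 : (B + G * D).mulVec (-u) ∈ S₂ := hsub (hG₁.2 (-u))
  have h3 : (A + G * C).mulVec s ∈ S₂ := hsub (hG₁.1 s hsS1)
  have heq : (A + G * C).mulVec (s + y) =
      (A + G * C).mulVec s + ((A.mulVec y + B.mulVec (-u)) - (B + G * D).mulVec (-u)) := by
    simp only [Matrix.add_mulVec, Matrix.mulVec_add, Matrix.mulVec_neg,
      ← Matrix.mulVec_mulVec, hCy]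
    abel
  rw [heq]
  exact S₂.add_mem h3 (S₂.sub_mem h1 h2)
end

section
/- The intersection of two (A,B,C,D)-self bounded subspaces is (A,B,C,D)-self bounded. -/
/-- The intersection of two self bounded subspaces is self bounded
(in particular output nulling). -/
theorem stmt14 {n m p : ℕ}
    (A : Matrix (Fin n) (Fin n) ℝ) (B : Matrix (Fin n) (Fin m) ℝ)
    (C : Matrix (Fin p) (Fin n) ℝ) (D : Matrix (Fin p) (Fin m) ℝ)
    (Vstar V₁ V₂ : Submodule ℝ (Fin n → ℝ))
    (hVstarON : ∀ x ∈ Vstar, ∃ u : Fin m → ℝ,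
      A.mulVec x + B.mulVec u ∈ Vstar ∧ C.mulVec x + D.mulVec u = 0)
    (hVstarMax : ∀ W : Submodule ℝ (Fin n → ℝ),
      (∀ x ∈ W, ∃ u : Fin m → ℝ,
        A.mulVec x + B.mulVec u ∈ W ∧ C.mulVec x + D.mulVec u = 0) → W ≤ Vstar)
    (hV₁ : ∀ x ∈ V₁, ∃ u : Fin m → ℝ,
      A.mulVec x + B.mulVec u ∈ V₁ ∧ C.mulVec x + D.mulVec u = 0)
    (hV₂ : ∀ x ∈ V₂, ∃ u : Fin m → ℝ,
      A.mulVec x + B.mulVec u ∈ V₂ ∧ C.mulVec x + D.mulVec u = 0)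
    (hsb₁ : ∀ u : Fin m → ℝ, D.mulVec u = 0 → B.mulVec u ∈ Vstar → B.mulVec u ∈ V₁)
    (hsb₂ : ∀ u : Fin m → ℝ, D.mulVec u = 0 → B.mulVec u ∈ Vstar → B.mulVec u ∈ V₂) :
    (∀ x ∈ V₁ ⊓ V₂, ∃ u : Fin m → ℝ,
      A.mulVec x + B.mulVec u ∈ V₁ ⊓ V₂ ∧ C.mulVec x + D.mulVec u = 0) ∧
    (∀ u : Fin m → ℝ, D.mulVec u = 0 → B.mulVec u ∈ Vstar → B.mulVec u ∈ V₁ ⊓ V₂) := by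
  have hV1s : V₁ ≤ Vstar := hVstarMax V₁ hV₁
  have hV2s : V₂ ≤ Vstar := hVstarMax V₂ hV₂
  constructor
  · rintro x ⟨hx1, hx2⟩
    obtain ⟨u₁, hu₁V, hu₁C⟩ := hV₁ x hx1
    obtain ⟨u₂, hu₂V, hu₂C⟩ := hV₂ x hx2
    have hD : D.mulVec (u₁ - u₂) = 0 := by
      rw [Matrix.mulVec_sub]
      have := sub_eq_zero.mpr (hu₁C.trans hu₂C.symm)
      simpa using this
    have hBeq : B.mulVec (u₁ - u₂)
        = (A.mulVec x + B.mulVec u₁) - (A.mulVec x + B.mulVec u₂) := by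
      rw [Matrix.mulVec_sub]; abel
    have hBV : B.mulVec (u₁ - u₂) ∈ Vstar := by
      rw [hBeq]; exact Submodule.sub_mem _ (hV1s hu₁V) (hV2s hu₂V)
    have hB1 := hsb₁ _ hD hBV
    have hB2 := hsb₂ _ hD hBV
    refine ⟨u₂, ⟨?_, hu₂V⟩, hu₂C⟩
    have : A.mulVec x + B.mulVec u₂
        = (A.mulVec x + B.mulVec u₁) - B.mulVec (u₁ - u₂) := by
      rw [Matrix.mulVec_sub]; abel
    rw [this]
    exact Submodule.sub_mem _ hu₁V hB1
  · exact fun u hD hB => ⟨hsb₁ u hD hB, hsb₂ u hD hB⟩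
end

section
/- The sum of two (A,B,C,D)-self hidden subspaces is (A,B,C,D)-self hidden. -/
/-- The sum of two self hidden subspaces is self hidden
(in particular input containing). -/
theorem stmt15 {n m p : ℕ}
    (A : Matrix (Fin n) (Fin n) ℝ) (B : Matrix (Fin n) (Fin m) ℝ)
    (C : Matrix (Fin p) (Fin n) ℝ) (D : Matrix (Fin p) (Fin m) ℝ)
    (Sstar S₁ S₂ : Submodule ℝ (Fin n → ℝ))
    (hSstarIC : ∀ x ∈ Sstar, ∀ u : Fin m → ℝ,
      C.mulVec x + D.mulVec u = 0 → A.mulVec x + B.mulVec u ∈ Sstar)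
    (hSstarMin : ∀ W : Submodule ℝ (Fin n → ℝ),
      (∀ x ∈ W, ∀ u : Fin m → ℝ,
        C.mulVec x + D.mulVec u = 0 → A.mulVec x + B.mulVec u ∈ W) → Sstar ≤ W)
    (hS₁ : ∀ x ∈ S₁, ∀ u : Fin m → ℝ,
      C.mulVec x + D.mulVec u = 0 → A.mulVec x + B.mulVec u ∈ S₁)
    (hS₂ : ∀ x ∈ S₂, ∀ u : Fin m → ℝ,
      C.mulVec x + D.mulVec u = 0 → A.mulVec x + B.mulVec u ∈ S₂)
    (hsh₁ : ∀ x ∈ S₁, ∃ s ∈ Sstar, ∃ y : Fin n → ℝ, ∃ u : Fin m → ℝ,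
      x = s + y ∧ C.mulVec y = D.mulVec u)
    (hsh₂ : ∀ x ∈ S₂, ∃ s ∈ Sstar, ∃ y : Fin n → ℝ, ∃ u : Fin m → ℝ,
      x = s + y ∧ C.mulVec y = D.mulVec u) :
    (∀ x ∈ S₁ ⊔ S₂, ∀ u : Fin m → ℝ,
      C.mulVec x + D.mulVec u = 0 → A.mulVec x + B.mulVec u ∈ S₁ ⊔ S₂) ∧
    (∀ x ∈ S₁ ⊔ S₂, ∃ s ∈ Sstar, ∃ y : Fin n → ℝ, ∃ u : Fin m → ℝ,
      x = s + y ∧ C.mulVec y = D.mulVec u) := by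

  have hst1 : Sstar ≤ S₁ := hSstarMin S₁ hS₁
  have hst2 : Sstar ≤ S₂ := hSstarMin S₂ hS₂
  constructor
  · intro x hx u hu
    rcases Submodule.mem_sup.mp hx with ⟨x₁, hx₁, x₂, hx₂, rfl⟩
    rcases hsh₁ x₁ hx₁ with ⟨s₁, hs₁, y₁, u₁, rfl, hy₁⟩
    rcases hsh₂ x₂ hx₂ with ⟨s₂, hs₂, y₂, u₂, rfl, hy₂⟩
    have hy₁m : y₁ ∈ S₁ := by
      have := S₁.sub_mem hx₁ (hst1 hs₁); simpa using this
    have hy₂m : y₂ ∈ S₂ := by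
      have := S₂.sub_mem hx₂ (hst2 hs₂); simpa using this
    have h1 : A.mulVec y₁ + B.mulVec (-u₁) ∈ S₁ := by
      apply hS₁ y₁ hy₁m
      simp [Matrix.mulVec_neg, hy₁]
    have h2 : A.mulVec y₂ + B.mulVec (-u₂) ∈ S₂ := by
      apply hS₂ y₂ hy₂m
      simp [Matrix.mulVec_neg, hy₂]
    have hs : A.mulVec (s₁ + s₂) + B.mulVec (u + u₁ + u₂) ∈ Sstar := by
      apply hSstarIC _ (Sstar.add_mem hs₁ hs₂)
      have : C.mulVec (s₁ + y₁ + (s₂ + y₂)) + D.mulVec u = 0 := hu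
      simp only [Matrix.mulVec_add] at this ⊢
      rw [hy₁, hy₂] at this
      linear_combination (norm := module) this
    have key : A.mulVec (s₁ + y₁ + (s₂ + y₂)) + B.mulVec u =
        (A.mulVec (s₁ + s₂) + B.mulVec (u + u₁ + u₂)) +
        ((A.mulVec y₁ + B.mulVec (-u₁)) + (A.mulVec y₂ + B.mulVec (-u₂))) := by
      simp only [Matrix.mulVec_add, Matrix.mulVec_neg]
      module
    rw [key]
    exact Submodule.add_mem _ (Submodule.mem_sup_left (hst1 hs))
      (Submodule.add_mem _ (Submodule.mem_sup_left h1) (Submodule.mem_sup_right h2))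
  · intro x hx
    rcases Submodule.mem_sup.mp hx with ⟨x₁, hx₁, x₂, hx₂, rfl⟩
    rcases hsh₁ x₁ hx₁ with ⟨s₁, hs₁, y₁, u₁, rfl, hy₁⟩
    rcases hsh₂ x₂ hx₂ with ⟨s₂, hs₂, y₂, u₂, rfl, hy₂⟩
    refine ⟨s₁ + s₂, Sstar.add_mem hs₁ hs₂, y₁ + y₂, u₁ + u₂, by module, ?_⟩
    simp [Matrix.mulVec_add, hy₁, hy₂]
end

section
/- Define the sequence of subspaces V₀ = ℝⁿ, V_{i+1} = [A;C]⁻¹((V_i ⊕ 0) + im[B;D]). Then (V_i) is monotonically non-increasing, and if V_h = V_{h+1} for some h, then V_j = V_h for all j ≥ h; moreover the limit V_h equals the largest (A,B,C,D)-output nulling subspace V*. -/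
/-- The sequence `V₀ = ℝⁿ`, `V_{i+1} = [A;C]⁻¹((V_i ⊕ 0) + im [B;D])` is
non-increasing, stabilizes once two consecutive terms agree, and its limit is
the largest `(A,B,C,D)`-output nulling subspace. -/
theorem stmt16 {n m p : ℕ}
    (A : Matrix (Fin n) (Fin n) ℝ) (B : Matrix (Fin n) (Fin m) ℝ)
    (C : Matrix (Fin p) (Fin n) ℝ) (D : Matrix (Fin p) (Fin m) ℝ)
    (V : ℕ → Submodule ℝ (Fin n → ℝ))
    (hV0 : V 0 = ⊤)
    (hVsucc : ∀ i : ℕ, ∀ x : Fin n → ℝ, x ∈ V (i + 1) ↔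
      ∃ v ∈ V i, ∃ u : Fin m → ℝ,
        A.mulVec x = v + B.mulVec u ∧ C.mulVec x = D.mulVec u) :
    (∀ i : ℕ, V (i + 1) ≤ V i) ∧
    (∀ h : ℕ, V h = V (h + 1) →
      (∀ j : ℕ, h ≤ j → V j = V h) ∧
      (∀ x ∈ V h, ∃ u : Fin m → ℝ,
        A.mulVec x + B.mulVec u ∈ V h ∧ C.mulVec x + D.mulVec u = 0) ∧
      (∀ W : Submodule ℝ (Fin n → ℝ),
        (∀ x ∈ W, ∃ u : Fin m → ℝ,
          A.mulVec x + B.mulVec u ∈ W ∧ C.mulVec x + D.mulVec u = 0) → W ≤ V h)) := by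
  have hmono : ∀ i : ℕ, V (i + 1) ≤ V i := by
    intro i
    induction i with
    | zero => rw [hV0]; exact le_top
    | succ k ih =>
      intro x hx
      rw [hVsucc] at hx ⊢
      obtain ⟨v, hv, u, h1, h2⟩ := hx
      exact ⟨v, ih hv, u, h1, h2⟩
  refine ⟨hmono, fun h hstab => ?_⟩
  have hstable : ∀ j : ℕ, h ≤ j → V j = V h := by
    intro j hj
    induction j with
    | zero => rw [Nat.le_zero.mp hj]
    | succ k ih =>
      rcases Nat.lt_or_ge h (k+1) with hlt | hge
      · have hk : h ≤ k := Nat.lt_succ_iff.mp hlt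
        have hVk : V k = V h := ih hk
        ext x
        rw [hVsucc, hVk, show (x ∈ V h) = (x ∈ V (h+1)) from by rw [← hstab], hVsucc]
      · have : h = k + 1 := le_antisymm hj hge
        rw [this]
  refine ⟨hstable, ?_, ?_⟩
  · intro x hx
    rw [hstab, hVsucc] at hx
    obtain ⟨v, hv, u, h1, h2⟩ := hx
    refine ⟨-u, ?_, ?_⟩
    · rw [Matrix.mulVec_neg, h1]; simpa using hv
    · rw [Matrix.mulVec_neg, h2]; simp
  · intro W hW
    have : ∀ i : ℕ, W ≤ V i := by
      intro i
      induction i with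
      | zero => rw [hV0]; exact le_top
      | succ k ih =>
        intro x hx
        obtain ⟨u, hu1, hu2⟩ := hW x hx
        rw [hVsucc]
        refine ⟨A.mulVec x + B.mulVec u, ih hu1, -u, ?_, ?_⟩
        · rw [Matrix.mulVec_neg]; ring
        · rw [Matrix.mulVec_neg]; linear_combination hu2
    exact this h
end

section
/- Let L ∈ ℝ^{n×q} with im L ⊆ V*, where V* is the largest (A,B,C,D)-output nulling subspace. Then the largest (A,[B L],C,[D 0])-output nulling subspace equals V*; moreover, every (A,[B L],C,[D 0])-self bounded subspace V satisfies im L ⊆ V. -/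
/-- If `im L ⊆ V*`, then the largest `(A,[B L],C,[D 0])`-output nulling subspace
equals `V*`, and every `(A,[B L],C,[D 0])`-self bounded subspace contains `im L`. -/
theorem stmt19 {n m p q : ℕ}
    (A : Matrix (Fin n) (Fin n) ℝ) (B : Matrix (Fin n) (Fin m) ℝ)
    (C : Matrix (Fin p) (Fin n) ℝ) (D : Matrix (Fin p) (Fin m) ℝ)
    (L : Matrix (Fin n) (Fin q) ℝ)
    (Vstar VstarExt : Submodule ℝ (Fin n → ℝ))
    -- `Vstar` is the largest `(A,B,C,D)`-output nulling subspace
    (hVstarON : ∀ x ∈ Vstar, ∃ u : Fin m → ℝ,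
      A.mulVec x + B.mulVec u ∈ Vstar ∧ C.mulVec x + D.mulVec u = 0)
    (hVstarMax : ∀ W : Submodule ℝ (Fin n → ℝ),
      (∀ x ∈ W, ∃ u : Fin m → ℝ,
        A.mulVec x + B.mulVec u ∈ W ∧ C.mulVec x + D.mulVec u = 0) → W ≤ Vstar)
    -- `VstarExt` is the largest `(A,[B L],C,[D 0])`-output nulling subspace
    (hVstarExtON : ∀ x ∈ VstarExt, ∃ u : Fin m → ℝ, ∃ w : Fin q → ℝ,
      A.mulVec x + B.mulVec u + L.mulVec w ∈ VstarExt ∧ C.mulVec x + D.mulVec u = 0)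
    (hVstarExtMax : ∀ W : Submodule ℝ (Fin n → ℝ),
      (∀ x ∈ W, ∃ u : Fin m → ℝ, ∃ w : Fin q → ℝ,
        A.mulVec x + B.mulVec u + L.mulVec w ∈ W ∧ C.mulVec x + D.mulVec u = 0) →
      W ≤ VstarExt)
    -- `im L ⊆ Vstar`
    (hL : ∀ w : Fin q → ℝ, L.mulVec w ∈ Vstar) :
    VstarExt = Vstar ∧
    (∀ V : Submodule ℝ (Fin n → ℝ),
      -- `V` is `(A,[B L],C,[D 0])`-output nulling
      (∀ x ∈ V, ∃ u : Fin m → ℝ, ∃ w : Fin q → ℝ,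
        A.mulVec x + B.mulVec u + L.mulVec w ∈ V ∧ C.mulVec x + D.mulVec u = 0) →
      -- `V` is `(A,[B L],C,[D 0])`-self bounded
      (∀ u : Fin m → ℝ, ∀ w : Fin q → ℝ, D.mulVec u = 0 →
        B.mulVec u + L.mulVec w ∈ VstarExt → B.mulVec u + L.mulVec w ∈ V) →
      ∀ w : Fin q → ℝ, L.mulVec w ∈ V) := by
  have hsub : Vstar ≤ VstarExt := by
    apply hVstarExtMax
    intro x hx
    obtain ⟨u, hu1, hu2⟩ := hVstarON x hx
    exact ⟨u, 0, by simpa using hu1, hu2⟩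
  have hsub2 : VstarExt ≤ Vstar := by
    apply hVstarMax
    intro x hx
    obtain ⟨u, w, hu1, hu2⟩ := hVstarExtON x hx
    refine ⟨u, ?_, hu2⟩
    have hLw : L.mulVec w ∈ VstarExt := hsub (hL w)
    have := VstarExt.sub_mem hu1 hLw
    simpa using this
  have heq : VstarExt = Vstar := le_antisymm hsub2 hsub
  refine ⟨heq, ?_⟩
  intro V _ hsb w
  have := hsb 0 w (by simp) (by simpa using hsub (hL w))
  simpa using this
end
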